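/- arXiv:2206.07774 — 9 statements merged into one kernel-verified Lean document; each statement's English description precedes it below -/
import Mathlib

section
/- Let K > 0 and Λ ∈ ℝ, and set ξ₍₋₎ = 1/6 − 1/√1080 and ξ₍₊₎ = 1/6 + 1/√1080. For ξ ∈ (ξ₍₋₎, ξ₍₊₎) define H₍₊₎(ξ) = sqrt( 1440·K · (1 + sqrt(1 − (Λ/(2160·K))·(1 − 30·(6ξ−1)²)))/(1 − 30·(6ξ−1)²) ). Then for every ξ ∈ (ξ₍₋₎, ξ₍₊₎) with Λ ≤ 2160·K, the number H = H₍₊₎(ξ) is a positive real number satisfying the massless consistency equation 0 = (1/960 − (6ξ−1)²/32)·H⁴ − 3·K·H² + Λ·K. -/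
theorem massless_Hplus_solution (K Λ ξ : ℝ) (hK : 0 < K)
    (hξ1 : 1/6 - 1/Real.sqrt 1080 < ξ) (hξ2 : ξ < 1/6 + 1/Real.sqrt 1080)
    (hΛ : Λ ≤ 2160 * K) :
    0 < Real.sqrt (1440 * K *
        ((1 + Real.sqrt (1 - (Λ / (2160 * K)) * (1 - 30 * (6 * ξ - 1)^2))) /
          (1 - 30 * (6 * ξ - 1)^2))) ∧
    0 = (1/960 - (6 * ξ - 1)^2 / 32) *
          (Real.sqrt (1440 * K *
            ((1 + Real.sqrt (1 - (Λ / (2160 * K)) * (1 - 30 * (6 * ξ - 1)^2))) /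
              (1 - 30 * (6 * ξ - 1)^2))))^4
        - 3 * K * (Real.sqrt (1440 * K *
            ((1 + Real.sqrt (1 - (Λ / (2160 * K)) * (1 - 30 * (6 * ξ - 1)^2))) /
              (1 - 30 * (6 * ξ - 1)^2))))^2
        + Λ * K := by
  have h1080 : (0:ℝ) < Real.sqrt 1080 := Real.sqrt_pos.mpr (by norm_num)
  have hsq1080 : (Real.sqrt 1080)^2 = 1080 := Real.sq_sqrt (by norm_num)
  -- bound on (6ξ-1)^2
  have hb : (6 * ξ - 1)^2 < 1/30 := by
    have he : 6 / Real.sqrt 1080 = 6 * (1 / Real.sqrt 1080) := by ring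
    have h1 : -(6 / Real.sqrt 1080) < 6 * ξ - 1 := by rw [he]; linarith
    have h2 : 6 * ξ - 1 < 6 / Real.sqrt 1080 := by rw [he]; linarith
    have h3 : (6 / Real.sqrt 1080)^2 = 1/30 := by
      rw [div_pow, hsq1080]; norm_num
    have := sq_lt_sq' h1 h2
    rw [h3] at this; exact this
  set a : ℝ := 1 - 30 * (6 * ξ - 1)^2 with ha_def
  have ha : 0 < a := by nlinarith
  have ha1 : a ≤ 1 := by nlinarith [sq_nonneg (6*ξ-1)]
  have ht : Λ / (2160 * K) ≤ 1 := (div_le_one (by positivity)).mpr hΛ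
  have hr : 0 ≤ 1 - (Λ / (2160 * K)) * a := by
    nlinarith [mul_nonneg (sub_nonneg.mpr ht) ha.le]
  set s : ℝ := Real.sqrt (1 - (Λ / (2160 * K)) * a) with hs_def
  have hs0 : 0 ≤ s := Real.sqrt_nonneg _
  have hs2 : s^2 = 1 - (Λ / (2160 * K)) * a := Real.sq_sqrt hr
  have hs2' : 2160 * K * s^2 = 2160 * K - Λ * a := by
    rw [hs2]; field_simp
  have harg : 0 < 1440 * K * ((1 + s) / a) := by positivity
  have hH2 : (Real.sqrt (1440 * K * ((1 + s) / a)))^2 = 1440 * K * ((1 + s) / a) :=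
    Real.sq_sqrt harg.le
  refine ⟨Real.sqrt_pos.mpr harg, ?_⟩
  have hH4 : (Real.sqrt (1440 * K * ((1 + s) / a)))^4
      = (1440 * K * ((1 + s) / a))^2 := by
    rw [show (4:ℕ) = 2*2 from rfl, pow_mul, hH2]
  rw [show (1:ℝ)/960 - (6 * ξ - 1)^2 / 32 = a / 960 by rw [ha_def]; ring, hH4, hH2]
  have hane : a ≠ 0 := ha.ne'
  field_simp
  linear_combination (-960 * K) * hs2'
end

section
/- Let K > 0 and Λ = 2160·K, and set H_vac = sqrt(Λ/3). Then for all ξ ∈ ℝ and H > 0, the equation 0 = (1/960 − (6ξ−1)²/32)·H⁴ − 3·K·H² + Λ·K holds if and only if ξ − 1/6 = (1/√1080)·(1 − 2·H_vac²/H²) or ξ − 1/6 = −(1/√1080)·(1 − 2·H_vac²/H²). -/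
theorem massless_degenerate_case (K Λ : ℝ) (hK : 0 < K) (hΛ : Λ = 2160 * K)
    (ξ H : ℝ) (hH : 0 < H) :
    (0 = (1/960 - (6 * ξ - 1)^2 / 32) * H^4 - 3 * K * H^2 + Λ * K) ↔
      (ξ - 1/6 = (1/Real.sqrt 1080) * (1 - 2 * (Real.sqrt (Λ/3))^2 / H^2) ∨
       ξ - 1/6 = -((1/Real.sqrt 1080) * (1 - 2 * (Real.sqrt (Λ/3))^2 / H^2))) := by
  subst hΛ
  have h3 : (Real.sqrt (2160 * K / 3))^2 = 720 * K := by
    rw [Real.sq_sqrt (by nlinarith)]; ring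
  rw [h3, ← mul_self_eq_mul_self_iff]
  have hs : (Real.sqrt 1080) * (Real.sqrt 1080) = 1080 := by
    exact Real.mul_self_sqrt (by norm_num)
  have hs0 : (0:ℝ) < Real.sqrt 1080 := Real.sqrt_pos.mpr (by norm_num)
  have hH2 : H^2 ≠ 0 := by positivity
  constructor
  · intro h
    field_simp
    nlinarith [h, hs, sq_nonneg H, sq_nonneg (H*H)]
  · intro h
    field_simp at h
    nlinarith [h, hs, sq_nonneg H]
end

section
/- Let w ∈ ℝ with w < 0 and w·exp(w) = −exp(−2). Set e₁ = −(15/2)·w² − 15·w, α = sqrt(−w), and s(α) = α²/4 − 1/2 − e₁/(30·α²) − log α. Then s(α) = 0 and s'(α) = 0, i.e. α is a degenerate (double) zero of s. -/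
theorem lambertW_double_zero (w : ℝ) (hw : w < 0)
    (hW : w * Real.exp w = -Real.exp (-2)) :
    (Real.sqrt (-w))^2/4 - 1/2
        - (-(15/2) * w^2 - 15 * w)/(30 * (Real.sqrt (-w))^2)
        - Real.log (Real.sqrt (-w)) = 0 ∧
    deriv (fun α : ℝ =>
        α^2/4 - 1/2 - (-(15/2) * w^2 - 15 * w)/(30 * α^2) - Real.log α)
      (Real.sqrt (-w)) = 0 := by
  have hwpos : (0:ℝ) < -w := by linarith
  set a := Real.sqrt (-w) with ha_def
  have ha : 0 < a := Real.sqrt_pos.mpr hwpos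
  have ha2 : a ^ 2 = -w := Real.sq_sqrt hwpos.le
  have hane : a ≠ 0 := ne_of_gt ha
  have hlog : Real.log (-w) = -2 - w := by
    have h1 : (-w) * Real.exp w = Real.exp (-2) := by linarith [hW]
    have h2 : Real.log ((-w) * Real.exp w) = -2 := by rw [h1, Real.log_exp]
    rw [Real.log_mul (ne_of_gt hwpos) (Real.exp_ne_zero w), Real.log_exp] at h2
    linarith
  have hloga : Real.log a = (-2 - w) / 2 := by
    rw [ha_def, Real.log_sqrt hwpos.le, hlog]
  constructor
  · have hwne : w ≠ 0 := ne_of_lt hw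
    rw [ha2, hloga]
    field_simp
    ring
  · set c : ℝ := -(15/2) * w^2 - 15 * w with hc
    have h30 : (30 * a ^ 2) ≠ 0 := by positivity
    have hd1 : HasDerivAt (fun α : ℝ => α ^ 2 / 4 - 1/2) (a / 2) a := by
      have := (hasDerivAt_pow 2 a).div_const 4
      have h := this.sub_const (1/2)
      convert h using 1
      · rfl
      · rfl
      ring
    have hd2 : HasDerivAt (fun α : ℝ => c / (30 * α ^ 2))
        ((0 * (30 * a ^ 2) - c * (30 * (2 * a))) / (30 * a ^ 2) ^ 2) a := by
      exact (hasDerivAt_const a c).div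
        (((hasDerivAt_pow 2 a).const_mul 30).congr_deriv (by ring)) h30
    have hd3 : HasDerivAt (fun α : ℝ => Real.log α) (1 / a) a := by
      simpa using Real.hasDerivAt_log hane
    have hd : HasDerivAt (fun α : ℝ =>
        α^2/4 - 1/2 - c/(30 * α^2) - Real.log α)
        (a / 2 - (0 * (30 * a ^ 2) - c * (30 * (2 * a))) / (30 * a ^ 2) ^ 2 - 1 / a) a :=
      (hd1.sub hd2).sub hd3
    rw [hd.deriv]
    rw [hc]
    have hw2 : w = -(a ^ 2) := by linarith [ha2]
    rw [hw2]
    field_simp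
    ring
end

section
/- Let e₁ < 0 and define X₍₋₎(h) = 2 + 1/h² − sqrt(2/15 + (1 − 2e₁/15)/h⁴) for h > 0, and h_crit = sqrt( sqrt((15/29)² − e₁/29) − 15/29 ). Then h_crit > 0, and for all h > 0: X₍₋₎(h) > 0 if and only if h > h_crit. -/
theorem Xminus_positivity (e₁ : ℝ) (he₁ : e₁ < 0) :
    0 < Real.sqrt (Real.sqrt ((15/29)^2 - e₁/29) - 15/29) ∧
    ∀ h : ℝ, 0 < h →
      (0 < 2 + 1/h^2 - Real.sqrt (2/15 + (1 - 2 * e₁ / 15)/h^4) ↔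
        Real.sqrt (Real.sqrt ((15/29)^2 - e₁/29) - 15/29) < h) := by
  set A := Real.sqrt ((15/29)^2 - e₁/29) with hA
  have ha : (0:ℝ) < (15/29)^2 - e₁/29 := by nlinarith
  have hA2 : A^2 = (15/29)^2 - e₁/29 := Real.sq_sqrt ha.le
  have hAnn : 0 ≤ A := Real.sqrt_nonneg _
  have hAgt : (15/29 : ℝ) < A := by nlinarith
  have hcrit : 0 < Real.sqrt (A - 15/29) := Real.sqrt_pos.mpr (by linarith)
  refine ⟨hcrit, fun h hp => ?_⟩
  have hh2 : 0 < h^2 := by positivity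
  have hh4 : 0 < h^4 := by positivity
  have hL : 0 < 2 + 1/h^2 := by positivity
  have hfact : (2 + 1/h^2)^2 - (2/15 + (1 - 2*e₁/15)/h^4)
      = (29*h^4 + 30*h^2 + e₁) * (2/(15*h^4)) := by
    field_simp
    ring
  have key1 : (2/15 + (1 - 2*e₁/15)/h^4 < (2 + 1/h^2)^2) ↔ 0 < 29*h^4 + 30*h^2 + e₁ := by
    rw [← sub_pos, hfact]
    constructor
    · intro hpos
      by_contra hc
      push_neg at hc
      nlinarith [div_pos (by norm_num : (0:ℝ)<2) (by positivity : (0:ℝ) < 15*h^4)]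
    · intro hpos
      exact mul_pos hpos (by positivity)
  have key2 : (0 < 29*h^4 + 30*h^2 + e₁) ↔ A - 15/29 < h^2 := by
    constructor
    · intro hpos
      nlinarith [sq_nonneg (h^2 + 15/29 + A)]
    · intro hlt
      nlinarith [sq_nonneg (h^2 + 15/29 - A)]
  constructor
  · intro hX
    have h1 : Real.sqrt (2/15 + (1 - 2*e₁/15)/h^4) < 2 + 1/h^2 := by linarith
    have h2 := (Real.sqrt_lt' hL).mp h1
    exact (Real.sqrt_lt' hp).mpr (key2.mp (key1.mp h2))
  · intro hlt
    have h2 : A - 15/29 < h^2 := (Real.sqrt_lt' hp).mp hlt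
    have h1 : Real.sqrt (2/15 + (1 - 2*e₁/15)/h^4) < 2 + 1/h^2 :=
      (Real.sqrt_lt' hL).mpr (key1.mpr (key2.mpr h2))
    linarith
end

section
/- Let e₁ < 0 and define X₍₋₎(h) = 2 + 1/h² − sqrt(2/15 + (1 − 2e₁/15)/h⁴) for h > 0. Then X₍₋₎ attains its global maximum over (0,∞) at h* = ((2e₁²/15) − e₁)^{1/4}, and the maximum value equals 2 − (15/2 − 225/(4e₁))^{−1/2}, which lies strictly between 2 − sqrt(2/15) and 2. -/
theorem Xminus_max (e₁ : ℝ) (he₁ : e₁ < 0) :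
    (2 + 1/((2 * e₁^2/15 - e₁) ^ ((1:ℝ)/4))^2
        - Real.sqrt (2/15 + (1 - 2 * e₁ / 15)/((2 * e₁^2/15 - e₁) ^ ((1:ℝ)/4))^4)
      = 2 - (Real.sqrt (15/2 - 225/(4 * e₁)))⁻¹) ∧
    (∀ h : ℝ, 0 < h →
      2 + 1/h^2 - Real.sqrt (2/15 + (1 - 2 * e₁ / 15)/h^4)
        ≤ 2 - (Real.sqrt (15/2 - 225/(4 * e₁)))⁻¹) ∧
    2 - Real.sqrt (2/15) < 2 - (Real.sqrt (15/2 - 225/(4 * e₁)))⁻¹ ∧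
    2 - (Real.sqrt (15/2 - 225/(4 * e₁)))⁻¹ < 2 := by
  have hne : e₁ ≠ 0 := ne_of_lt he₁
  have hme : (0:ℝ) < -e₁ := by linarith
  have ha : (0:ℝ) < 2 * e₁^2/15 - e₁ := by nlinarith [sq_nonneg e₁]
  set a : ℝ := 2 * e₁^2/15 - e₁ with hadef
  set t : ℝ := Real.sqrt a with htdef
  have ht : 0 < t := Real.sqrt_pos.mpr ha
  have htne : t ≠ 0 := ne_of_gt ht
  have ht2 : t^2 = 2 * e₁^2/15 - e₁ := Real.sq_sqrt ha.le
  -- powers of h*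
  have hp2 : ((a ^ ((1:ℝ)/4))^2) = t := by
    rw [htdef, Real.sqrt_eq_rpow, ← Real.rpow_natCast (a ^ ((1:ℝ)/4)) 2,
      ← Real.rpow_mul ha.le]
    norm_num
  have hp4 : ((a ^ ((1:ℝ)/4))^4) = a := by
    rw [← Real.rpow_natCast (a ^ ((1:ℝ)/4)) 4, ← Real.rpow_mul ha.le]
    norm_num
  -- sqrt s
  have hsA : (15:ℝ)/2 - 225/(4 * e₁) = (15/(-(2*e₁)))^2 * a := by
    rw [hadef]
    field_simp
    ring
  have hsq : Real.sqrt (15/2 - 225/(4 * e₁)) = (15/(-(2*e₁))) * t := by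
    rw [hsA, Real.sqrt_mul (sq_nonneg _), Real.sqrt_sq (le_of_lt (div_pos (by norm_num) (by linarith)))]
  have hc : (Real.sqrt (15/2 - 225/(4 * e₁)))⁻¹ = -(2*e₁) / (15 * t) := by
    rw [hsq]
    field_simp
  have hcpos : 0 < (Real.sqrt (15/2 - 225/(4 * e₁)))⁻¹ := by
    rw [hc]; exact div_pos (by linarith) (by positivity)
  refine ⟨?_, ?_, ?_, by linarith⟩
  · -- equality at h*
    have hin : (2:ℝ)/15 + (1 - 2 * e₁ / 15)/((a ^ ((1:ℝ)/4))^4)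
        = ((1 - 2 * e₁ / 15)/t)^2 := by
      rw [hp4, div_pow, ht2, hadef]
      have hne2 : (2 * e₁^2/15 - e₁ : ℝ) ≠ 0 := ne_of_gt ha
      have hX : (1 - 2*e₁/15)^2 = 2/15*(2*e₁^2/15 - e₁) + (1 - 2*e₁/15) := by ring
      rw [hX, add_div, mul_div_cancel_right₀ _ hne2]
    rw [hin, Real.sqrt_sq (div_nonneg (by linarith) ht.le), hp2, hc]
    field_simp
    ring
  · intro h hh
    rw [hc]
    set c : ℝ := -(2*e₁) / (15 * t) with hcdef
    have hcp : 0 < c := by rw [hcdef]; exact div_pos (by linarith) (by positivity)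
    have hct : c * t = -(2*e₁)/15 := by rw [hcdef]; field_simp
    set u : ℝ := 1/h^2 with hudef
    have hu : 0 < u := by positivity
    have hid : (2/15 + (1 - 2*e₁/15)*u^2 - (u + c)^2) * t^2
        = (-(2*e₁)/15) * (u*t - 1)^2 := by
      linear_combination (-2*u*t - (c*t - 2*e₁/15)) * hct + (2/15) * ht2
    have key : (u + c)^2 ≤ 2/15 + (1 - 2*e₁/15)*u^2 := by
      nlinarith [hid, sq_nonneg (u*t - 1), mul_pos ht ht, he₁]
    have key' : (u + c)^2 ≤ 2/15 + (1 - 2 * e₁ / 15)/h^4 := by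
      have : (1 - 2 * e₁ / 15)/h^4 = (1 - 2*e₁/15)*u^2 := by
        rw [hudef]; field_simp
      linarith [key, this.ge, this.le]
    have hle : u + c ≤ Real.sqrt (2/15 + (1 - 2 * e₁ / 15)/h^4) :=
      Real.le_sqrt_of_sq_le key'
    have : 2 + 1/h^2 - Real.sqrt (2/15 + (1 - 2 * e₁ / 15)/h^4) ≤ 2 - c := by
      rw [hudef] at hle; linarith
    linarith
  · have h1 : Real.sqrt (15/2) < Real.sqrt (15/2 - 225/(4 * e₁)) := by
      apply Real.sqrt_lt_sqrt (by norm_num)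
      have h225 : 225/(4 * e₁) < 0 := div_neg_of_pos_of_neg (by norm_num) (by linarith)
      linarith
    have h2 : (Real.sqrt (15/2 - 225/(4 * e₁)))⁻¹ < (Real.sqrt (15/2))⁻¹ :=
      inv_strictAnti₀ (Real.sqrt_pos.mpr (by norm_num)) h1
    have h3 : (Real.sqrt (15/2))⁻¹ = Real.sqrt (2/15) := by
      rw [← Real.sqrt_inv]
      norm_num
    exact sub_lt_sub_left (h3 ▸ h2) 2
end

section
/- Let U ⊆ ℝ² be open and connected and let F : U → ℝ be continuous with the property that F has no local extremum in U (i.e. no point u ∈ U admits a neighborhood on which F(u) is a maximum or minimum of F). Then the open set M = {u ∈ U : F(u) ≠ 0} has no nonempty connected component N whose closure (in ℝ²) is a compact subset of U. -/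
theorem no_compact_component_of_nonvanishing (U : Set (ℝ × ℝ))
    (hU : IsOpen U) (hUc : IsConnected U) (F : ℝ × ℝ → ℝ)
    (hF : ContinuousOn F U)
    (hmax : ∀ u ∈ U, ¬ IsLocalMaxOn F U u)
    (hmin : ∀ u ∈ U, ¬ IsLocalMinOn F U u) :
    ∀ x ∈ {u ∈ U | F u ≠ 0},
      ¬ (IsCompact (closure (connectedComponentIn {u ∈ U | F u ≠ 0} x)) ∧
        closure (connectedComponentIn {u ∈ U | F u ≠ 0} x) ⊆ U) := by
  intro x hx ⟨hcomp, hsub⟩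
  set M : Set (ℝ × ℝ) := {u ∈ U | F u ≠ 0} with hMdef
  have hM : IsOpen M := by
    have : M = U ∩ F ⁻¹' {(0 : ℝ)}ᶜ := by
      ext u; simp [hMdef]
    rw [this]
    exact hF.isOpen_inter_preimage hU isOpen_compl_singleton
  set N := connectedComponentIn M x with hNdef
  have hNopen : IsOpen N := hM.connectedComponentIn
  have hNsubM : N ⊆ M := connectedComponentIn_subset M x
  have hxN : x ∈ N := mem_connectedComponentIn hx
  -- closure N ∩ M ⊆ N
  have hclM : ∀ y ∈ closure N, y ∈ M → y ∈ N := by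
    intro y hy hyM
    have hyN' : y ∈ connectedComponentIn M y := mem_connectedComponentIn hyM
    have hopen : IsOpen (connectedComponentIn M y) := hM.connectedComponentIn
    obtain ⟨z, hz1, hz2⟩ := mem_closure_iff.mp hy _ hopen hyN'
    have e1 : connectedComponentIn M y = connectedComponentIn M z :=
      connectedComponentIn_eq hz1
    have e2 : N = connectedComponentIn M z := connectedComponentIn_eq hz2
    rw [e1, ← e2] at hyN'
    exact hyN'
  have hNne : (closure N).Nonempty := ⟨x, subset_closure hxN⟩
  have hFcl : ContinuousOn F (closure N) := hF.mono hsub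
  rcases ne_iff_lt_or_gt.mp hx.2 with hneg | hpos
  · -- F x < 0 : use minimum
    obtain ⟨a, haN, hamin⟩ := hcomp.exists_isMinOn hNne hFcl
    have hFa : F a < 0 := lt_of_le_of_lt (hamin (subset_closure hxN)) hneg
    have haM : a ∈ M := ⟨hsub haN, ne_of_lt hFa⟩
    have haNin : a ∈ N := hclM a haN haM
    refine hmin a haM.1 ?_
    have hmem : N ∈ nhdsWithin a U :=
      mem_nhdsWithin_of_mem_nhds (hNopen.mem_nhds haNin)
    exact Filter.eventually_of_mem hmem fun y hy => hamin (subset_closure hy)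
  · -- F x > 0 : use maximum
    obtain ⟨a, haN, hamax⟩ := hcomp.exists_isMaxOn hNne hFcl
    have hFa : 0 < F a := lt_of_lt_of_le hpos (hamax (subset_closure hxN))
    have haM : a ∈ M := ⟨hsub haN, ne_of_gt hFa⟩
    have haNin : a ∈ N := hclM a haN haM
    refine hmax a haM.1 ?_
    have hmem : N ∈ nhdsWithin a U :=
      mem_nhdsWithin_of_mem_nhds (hNopen.mem_nhds haNin)
    exact Filter.eventually_of_mem hmem fun y hy => hamax (subset_closure hy)
end

section
/- Let f : (9/4, ∞) → ℝ be any function satisfying |f(x) − log x| ≤ 3/x for all x > 9/4. Fix α > 0, e₁, e₂ ∈ ℝ and define, for x > 9/4, F(x) = (x²/4 − x + 29/30)·(α²/x) − (x/2 + e₂/30 − 1) − (e₁·x)/(30·α²) − (x/2 − 1)·(2·log(α/√x) + f(x)). Then F(x)/x → s(α) as x → ∞, where s(α) = α²/4 − 1/2 − e₁/(30·α²) − log α. -/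
open Filter

theorem large_x_asymptotics (f : ℝ → ℝ)
    (hf : ∀ x : ℝ, 9/4 < x → |f x - Real.log x| ≤ 3/x)
    (α e₁ e₂ : ℝ) (hα : 0 < α) :
    Tendsto (fun x : ℝ =>
        ((x^2/4 - x + 29/30) * (α^2/x) - (x/2 + e₂/30 - 1)
          - e₁ * x/(30 * α^2)
          - (x/2 - 1) * (2 * Real.log (α / Real.sqrt x) + f x)) / x)
      atTop (nhds (α^2/4 - 1/2 - e₁/(30 * α^2) - Real.log α)) := by
  set L : ℝ := α^2/4 - 1/2 - e₁/(30 * α^2) - Real.log α with hL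
  set F : ℝ → ℝ := fun x =>
        ((x^2/4 - x + 29/30) * (α^2/x) - (x/2 + e₂/30 - 1)
          - e₁ * x/(30 * α^2)
          - (x/2 - 1) * (2 * Real.log (α / Real.sqrt x) + f x)) / x with hF
  set C : ℝ := α^2 + (29/30)*α^2 + |e₂/30 - 1| + 2*|Real.log α| + 3 with hC
  have hC0 : Tendsto (fun x : ℝ => C / x) atTop (nhds 0) :=
    tendsto_const_nhds.div_atTop tendsto_id
  have key : ∀ᶠ x in atTop, ‖F x - L‖ ≤ C / x := by
    filter_upwards [eventually_ge_atTop (3:ℝ)] with x hx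
    have hx0 : (0:ℝ) < x := by linarith
    have hx94 : (9:ℝ)/4 < x := by linarith
    have hε := hf x hx94
    set ε : ℝ := f x - Real.log x with hεdef
    have hsx : Real.sqrt x ≠ 0 := by
      positivity
    have hlog : 2 * Real.log (α / Real.sqrt x) + f x = 2 * Real.log α + ε := by
      rw [Real.log_div hα.ne' hsx, Real.log_sqrt hx0.le, hεdef]
      ring
    have hdiff : F x - L = -(α^2/x) + ((29/30)*α^2)/x^2 - (e₂/30-1)/x
        + 2*Real.log α/x - (1/2 - 1/x)*ε := by
      simp only [hF, hlog, hL]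
      field_simp
      ring
    rw [hdiff, Real.norm_eq_abs]
    have hεterm : |(1/2 - 1/x)*ε| ≤ 3/x := by
      rw [abs_mul]
      have h1 : |1/2 - 1/x| ≤ 1 := by
        rw [abs_le]
        have h2 : (0:ℝ) < 1/x := by positivity
        have h3 : (1:ℝ)/x ≤ 1/3 := by
          apply div_le_div_of_nonneg_left <;> linarith
        constructor <;> linarith
      calc |1/2 - 1/x| * |ε| ≤ 1 * (3/x) := by
            apply mul_le_mul h1 hε (abs_nonneg _) (by norm_num)
        _ = 3/x := by ring
    have hεtb := abs_le.mp hεterm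
    have hq2 : ((29/30)*α^2)/x^2 ≤ ((29/30)*α^2)/x := by
      apply div_le_div_of_nonneg_left (by positivity) hx0
      nlinarith
    have hq2' : (0:ℝ) ≤ ((29/30)*α^2)/x^2 := by positivity
    have hq1 : (0:ℝ) ≤ α^2/x := by positivity
    have hq3 : (e₂/30-1)/x ≤ |e₂/30 - 1|/x :=
      div_le_div_of_nonneg_right (le_abs_self _) hx0.le
    have hq3' : -(|e₂/30 - 1|/x) ≤ (e₂/30-1)/x := by
      rw [← neg_div]
      exact div_le_div_of_nonneg_right (neg_abs_le _) hx0.le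
    have hq4 : 2*Real.log α/x ≤ 2*|Real.log α|/x := by
      apply div_le_div_of_nonneg_right ?_ hx0.le
      have := le_abs_self (Real.log α); linarith
    have hq4' : -(2*|Real.log α|/x) ≤ 2*Real.log α/x := by
      rw [← neg_div]
      apply div_le_div_of_nonneg_right ?_ hx0.le
      have := neg_abs_le (Real.log α); linarith
    have hCx : C/x = α^2/x + ((29/30)*α^2)/x + |e₂/30 - 1|/x + 2*|Real.log α|/x + 3/x := by
      rw [hC]; ring
    rw [abs_le]
    constructor <;> rw [hCx] <;> linarith
  have h0 : Tendsto (fun x => F x - L) atTop (nhds 0) :=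
    squeeze_zero_norm' key hC0
  have := h0.add_const L
  simpa using this
end

section
/- Let K > 0 and Λ > 2160·K. Define H_min = sqrt( (K/29)·sqrt(1440² + 29·960·(Λ/K)) − 1440·K/29 ) and, for H > H_min, Ξ₍₋₎(H) = 1/6 − sqrt(1/1080 − 8K/(3H²) + 8ΛK/(9H⁴)). Then for every H > H_min the radicand 1/1080 − 8K/(3H²) + 8ΛK/(9H⁴) is nonnegative, Ξ₍₋₎(H) > 0, and the pair (ξ, H) = (Ξ₍₋₎(H), H) satisfies the massless consistency equation 0 = (1/960 − (6ξ−1)²/32)·H⁴ − 3·K·H² + Λ·K. -/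
set_option maxHeartbeats 1000000


theorem massless_lower_xi_branch (K Λ : ℝ) (hK : 0 < K) (hΛ : 2160 * K < Λ) :
    ∀ H : ℝ,
      Real.sqrt ((K/29) * Real.sqrt (1440^2 + 29 * 960 * (Λ/K)) - 1440 * K/29) < H →
      0 ≤ 1/1080 - 8 * K/(3 * H^2) + 8 * Λ * K/(9 * H^4) ∧
      0 < 1/6 - Real.sqrt (1/1080 - 8 * K/(3 * H^2) + 8 * Λ * K/(9 * H^4)) ∧
      0 = (1/960 - (6 * (1/6 - Real.sqrt (1/1080 - 8 * K/(3 * H^2) + 8 * Λ * K/(9 * H^4))) - 1)^2 / 32) * H^4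
          - 3 * K * H^2 + Λ * K := by
  intro H hH
  have hΛpos : 0 < Λ := lt_trans (by positivity) hΛ
  have hKne : K ≠ 0 := ne_of_gt hK
  set S := Real.sqrt (1440^2 + 29 * 960 * (Λ/K)) with hSdef
  have hargS : (0:ℝ) ≤ 1440^2 + 29 * 960 * (Λ/K) := by
    have := div_pos hΛpos hK; nlinarith
  have hS2 : S^2 = 1440^2 + 29 * 960 * (Λ/K) := Real.sq_sqrt hargS
  have hS2' : K * S^2 = 1440^2 * K + 27840 * Λ := by
    rw [hS2]; field_simp; ring_nf
  have hSge : (1440:ℝ) ≤ S := by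
    have h1 : Real.sqrt (1440^2) ≤ S := Real.sqrt_le_sqrt (by
      have := div_pos hΛpos hK; nlinarith)
    rwa [show ((1440:ℝ)^2) = 1440^2 by ring, Real.sqrt_sq (by norm_num)] at h1
  have harg : 0 ≤ (K/29) * S - 1440 * K/29 := by nlinarith
  have hHpos : 0 < H := lt_of_le_of_lt (Real.sqrt_nonneg _) hH
  have hH2 : (K/29) * S - 1440 * K/29 < H^2 := by
    have := (Real.sqrt_lt' hHpos).mp hH
    linarith [this]
  have h2 : (0:ℝ) < H^2 := by positivity
  have h4 : (0:ℝ) < H^4 := by positivity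
  have hP : 0 < H^4/1080 - 8/3*K*H^2 + 8/9*Λ*K := by
    nlinarith [sq_nonneg (H^2 - 1440*K)]
  have hRval : 1/1080 - 8 * K/(3 * H^2) + 8 * Λ * K/(9 * H^4)
      = (H^4/1080 - 8/3*K*H^2 + 8/9*Λ*K)/H^4 := by
    field_simp
  have hR : 0 < 1/1080 - 8 * K/(3 * H^2) + 8 * Λ * K/(9 * H^4) := by
    rw [hRval]; exact div_pos hP h4
  refine ⟨le_of_lt hR, ?_, ?_⟩
  · -- positivity of Ξ₋: need sqrt R < 1/6
    have hq : 0 < 29/1080*H^4 + 8/3*K*H^2 - 8/9*Λ*K := by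
      have ha : 29/1080*((K/29) * S - 1440 * K/29)^2
          + 8/3*K*((K/29) * S - 1440 * K/29) - 8/9*Λ*K = 0 := by
        linear_combination (K/(1080*29)) * hS2'
      have hfac : 0 < 29/1080*(H^2 + ((K/29) * S - 1440 * K/29)) + 8/3*K := by
        nlinarith
      nlinarith [mul_pos (sub_pos.mpr hH2) hfac]
    have hRlt : 1/1080 - 8 * K/(3 * H^2) + 8 * Λ * K/(9 * H^4) < (1/6)^2 := by
      rw [hRval, div_lt_iff₀ h4]; nlinarith
    have := (Real.sqrt_lt' (by norm_num : (0:ℝ) < 1/6)).mpr hRlt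
    linarith
  · have hs2 : Real.sqrt (1/1080 - 8 * K/(3 * H^2) + 8 * Λ * K/(9 * H^4)) ^ 2
        = 1/1080 - 8 * K/(3 * H^2) + 8 * Λ * K/(9 * H^4) := Real.sq_sqrt (le_of_lt hR)
    have key : H^4 * Real.sqrt (1/1080 - 8 * K/(3 * H^2) + 8 * Λ * K/(9 * H^4)) ^ 2
        = H^4/1080 - 8/3*K*H^2 + 8/9*Λ*K := by
      rw [hs2, hRval]; field_simp
    linear_combination (9/8) * key
end

section
/- Let a : ℝ → ℝ be a positive differentiable function and ρ, p : ℝ → ℝ differentiable functions satisfying the Friedmann (energy) equation 3·(a'(t)/a(t))² = κ·ρ(t) + Λ and the continuity equation ρ'(t) + 3·(a'(t)/a(t))·(ρ(t) + p(t)) = 0 for all t, with κ ≠ 0. Then at every t with a'(t) ≠ 0, the second Friedmann (pressure/trace-type) equation holds: 2·a''(t)/a(t) + (a'(t)/a(t))² = −κ·p(t) + Λ. -/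
theorem friedmann_trace_equation (a ρ p : ℝ → ℝ) (κ Λ : ℝ) (hκ : κ ≠ 0)
    (ha : Differentiable ℝ a) (hapos : ∀ t, 0 < a t)
    (ha' : Differentiable ℝ (deriv a))
    (hρ : Differentiable ℝ ρ) (hp : Differentiable ℝ p)
    (hFried : ∀ t, 3 * (deriv a t / a t)^2 = κ * ρ t + Λ)
    (hCont : ∀ t, deriv ρ t + 3 * (deriv a t / a t) * (ρ t + p t) = 0) :
    ∀ t, deriv a t ≠ 0 →
      2 * deriv (deriv a) t / a t + (deriv a t / a t)^2 = -κ * p t + Λ := by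
  intro t ha't
  have hat : a t ≠ 0 := (hapos t).ne'
  -- derivative of a'/a at t
  have hH : HasDerivAt (fun s => deriv a s / a s)
      ((deriv (deriv a) t * a t - deriv a t * deriv a t) / (a t)^2) t :=
    ((ha' t).hasDerivAt).div ((ha t).hasDerivAt) hat
  have hL : HasDerivAt (fun s => 3 * (deriv a s / a s)^2)
      (3 * (2 * (deriv a t / a t) *
        ((deriv (deriv a) t * a t - deriv a t * deriv a t) / (a t)^2))) t := by
    have := (hH.pow 2).const_mul (3 : ℝ)
    simpa [mul_comm, mul_assoc, mul_left_comm] using this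
  have hR : HasDerivAt (fun s => κ * ρ s + Λ) (κ * deriv ρ t) t :=
    (((hρ t).hasDerivAt).const_mul κ).add_const Λ
  have hfun : (fun s => 3 * (deriv a s / a s)^2) = fun s => κ * ρ s + Λ :=
    funext hFried
  have key : 3 * (2 * (deriv a t / a t) *
      ((deriv (deriv a) t * a t - deriv a t * deriv a t) / (a t)^2)) = κ * deriv ρ t := by
    have := hL.deriv
    rw [hfun] at this
    rw [← this, hR.deriv]
  have hρ' : deriv ρ t = -(3 * (deriv a t / a t) * (ρ t + p t)) := by
    have := hCont t; linarith
  have hκρ : κ * ρ t = 3 * (deriv a t / a t)^2 - Λ := by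
    have := hFried t; linarith
  rw [hρ'] at key
  have hne : (3 : ℝ) * deriv a t * a t ≠ 0 := by
    simp [ha't, hat]
  have key2 : (3 * deriv a t * a t) *
      (2 * (deriv (deriv a) t * a t - deriv a t ^ 2)) =
      (3 * deriv a t * a t) * (-(κ * (ρ t + p t)) * (a t)^2) := by
    field_simp at key
    linear_combination (3 * deriv a t * a t) * key
  have key3 := mul_left_cancel₀ hne key2
  have hκρ2 : κ * ρ t * (a t)^2 = 3 * (deriv a t)^2 - Λ * (a t)^2 := by
    have h := hκρ
    field_simp at h
    linear_combination h
  field_simp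
  linear_combination key3 - hκρ2
end
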